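/- For every l ∈ {0,1,2} and m ∈ {0,1,…,n−1}, one has φ(P_{l,m}) = P_{l+1 mod 3, m}. Consequently the set of 3n points { P_{l,m} } is invariant under φ and decomposes into exactly n orbits { P_{0,m}, P_{1,m}, P_{2,m} }, each of size three, under the action of the group generated by φ. -/

import Mathlib

open Complex

noncomputable def ρ : ℂ := Complex.exp (2 * Real.pi * Complex.I / 3)

noncomputable def a : ℂ := (1 - ρ) / 3

noncomputable def Δn (n : ℕ) : AddSubgroup ℂ := AddSubgroup.closure {(n : ℂ), 1 - ρ}

noncomputable def Δ : AddSubgroup ℂ := AddSubgroup.closure {1, ρ}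

abbrev G : Type := ℂ ⧸ Δ

abbrev Gn (n : ℕ) : Type := ℂ ⧸ Δn n

abbrev An (n : ℕ) : Type := G × Gn n

noncomputable def mkG : ℂ → G := QuotientAddGroup.mk

noncomputable def mkGn (n : ℕ) : ℂ → Gn n := QuotientAddGroup.mk

/-- The point P_{l,m} = ([2/3 + l·a], [2/3 + l·a + m]ₙ). -/
noncomputable def P (n : ℕ) (l : Fin 3) (m : Fin n) : An n :=
  (mkG (2 / 3 + (l.val : ℂ) * a), mkGn n (2 / 3 + (l.val : ℂ) * a + (m.val : ℂ)))

lemma hrho_im : ρ.im = Real.sin (2 * Real.pi / 3) := by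
  have h : 2 * (Real.pi:ℂ) * Complex.I / 3 = ((2 * Real.pi / 3 : ℝ) : ℂ) * Complex.I := by
    push_cast; ring
  rw [ρ, h, Complex.exp_ofReal_mul_I_im]

lemma hrho_im_pos : 0 < ρ.im := by
  rw [hrho_im]
  apply Real.sin_pos_of_pos_of_lt_pi <;> nlinarith [Real.pi_pos]

lemma hrho_cube : ρ ^ 3 = 1 := by
  rw [ρ, ← Complex.exp_nat_mul]
  have h : (3:ℕ) * (2 * (Real.pi:ℂ) * Complex.I / 3) = 2 * Real.pi * Complex.I := by
    push_cast; ring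
  rw [h, Complex.exp_two_pi_mul_I]

lemma hrho_ne_one : ρ ≠ 1 := by
  intro h
  have := hrho_im_pos
  rw [h] at this
  simp at this

lemma hrho_sum : ρ ^ 2 + ρ + 1 = 0 := by
  have h : (ρ - 1) * (ρ ^ 2 + ρ + 1) = 0 := by
    have := hrho_cube; linear_combination this - 1
  rcases mul_eq_zero.mp h with h' | h'
  · exact absurd (by linear_combination h' : ρ = 1) hrho_ne_one
  · exact h'

lemma mem_Δ (p q : ℤ) : (p : ℂ) + (q : ℂ) * ρ ∈ Δ := by
  have h1 : (1:ℂ) ∈ Δ := AddSubgroup.subset_closure (by simp)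
  have h2 : ρ ∈ Δ := AddSubgroup.subset_closure (by simp)
  have := AddSubgroup.add_mem Δ (AddSubgroup.zsmul_mem Δ h1 p) (AddSubgroup.zsmul_mem Δ h2 q)
  simpa [zsmul_eq_mul] using this

lemma mem_Δn (n : ℕ) (p q : ℤ) : (p : ℂ) * n + (q : ℂ) * (1 - ρ) ∈ Δn n := by
  have h1 : (n:ℂ) ∈ Δn n := AddSubgroup.subset_closure (by simp)
  have h2 : (1 - ρ) ∈ Δn n := AddSubgroup.subset_closure (by simp)
  have := AddSubgroup.add_mem (Δn n) (AddSubgroup.zsmul_mem (Δn n) h1 p)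
    (AddSubgroup.zsmul_mem (Δn n) h2 q)
  simpa [zsmul_eq_mul] using this

lemma mem_Δ_elim {x : ℂ} (hx : x ∈ Δ) : ∃ p q : ℤ, x = (p : ℂ) + (q : ℂ) * ρ := by
  induction hx using AddSubgroup.closure_induction with
  | mem y hy =>
    rcases hy with h | h
    · exact ⟨1, 0, by simp [h]⟩
    · rw [Set.mem_singleton_iff] at h
      exact ⟨0, 1, by simp [h]⟩
  | zero => exact ⟨0, 0, by simp⟩
  | add x y _ _ hx hy =>
    obtain ⟨p, q, rfl⟩ := hx; obtain ⟨p', q', rfl⟩ := hy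
    exact ⟨p + p', q + q', by push_cast; ring⟩
  | neg x _ hx =>
    obtain ⟨p, q, rfl⟩ := hx
    exact ⟨-p, -q, by push_cast; ring⟩

lemma mem_Δn_elim {n : ℕ} {x : ℂ} (hx : x ∈ Δn n) :
    ∃ p q : ℤ, x = (p : ℂ) * n + (q : ℂ) * (1 - ρ) := by
  induction hx using AddSubgroup.closure_induction with
  | mem y hy =>
    rcases hy with h | h
    · exact ⟨1, 0, by simp [h]⟩
    · rw [Set.mem_singleton_iff] at h
      exact ⟨0, 1, by simp [h]⟩
  | zero => exact ⟨0, 0, by simp⟩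
  | add x y _ _ hx hy =>
    obtain ⟨p, q, rfl⟩ := hx; obtain ⟨p', q', rfl⟩ := hy
    exact ⟨p + p', q + q', by push_cast; ring⟩
  | neg x _ hx =>
    obtain ⟨p, q, rfl⟩ := hx
    exact ⟨-p, -q, by push_cast; ring⟩

lemma mkG_eq {x y : ℂ} (h : y - x ∈ Δ) : mkG x = mkG y := by
  exact (QuotientAddGroup.eq).mpr (by simpa [neg_add_eq_sub] using h)

lemma mkGn_eq {n : ℕ} {x y : ℂ} (h : y - x ∈ Δn n) : mkGn n x = mkGn n y := by
  exact (QuotientAddGroup.eq).mpr (by simpa [neg_add_eq_sub] using h)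

lemma mkG_eq_elim {x y : ℂ} (h : mkG x = mkG y) : y - x ∈ Δ := by
  have := (QuotientAddGroup.eq).mp h
  simpa [neg_add_eq_sub] using this

lemma mkGn_eq_elim {n : ℕ} {x y : ℂ} (h : mkGn n x = mkGn n y) : y - x ∈ Δn n := by
  have := (QuotientAddGroup.eq).mp h
  simpa [neg_add_eq_sub] using this

lemma a_im : a.im = -ρ.im / 3 := by
  simp [a, Complex.div_im, Complex.normSq]

lemma P_inj {n : ℕ} {l l' : Fin 3} {m m' : Fin n} (h : P n l m = P n l' m') :
    l = l' ∧ m = m' := by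
  obtain ⟨h1, h2⟩ := Prod.mk.injEq _ _ _ _ ▸ h
  -- first component : l = l'
  obtain ⟨p, q, hpq⟩ := mem_Δ_elim (mkG_eq_elim h1)
  have him := congrArg Complex.im hpq
  simp [Complex.add_im, Complex.sub_im, Complex.mul_im, a_im] at him
  -- him should say ((l'.val:ℝ) - l.val) * (-ρ.im/3) = q * ρ.im
  have hρim := hrho_im_pos
  have hl : ((l'.val : ℝ) - (l.val : ℝ)) * (-ρ.im / 3) = (q : ℝ) * ρ.im := by
    linarith [him]
  have hl2 : ((l'.val : ℤ) - (l.val : ℤ) : ℝ) = ((-3 * q : ℤ) : ℝ) := by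
    push_cast
    have := hρim.ne'
    field_simp at hl
    nlinarith [hl]
  have hl3 : (l'.val : ℤ) - (l.val : ℤ) = -3 * q := by exact_mod_cast hl2
  have hleq : l = l' := by
    have h3 := l.isLt; have h4 := l'.isLt
    exact Fin.ext (by omega)
  subst hleq
  refine ⟨rfl, ?_⟩
  -- second component : m = m'
  obtain ⟨p', q', hpq'⟩ := mem_Δn_elim (mkGn_eq_elim h2)
  have him' := congrArg Complex.im hpq'
  simp [Complex.add_im, Complex.sub_im, Complex.mul_im] at him'
  -- him' : 0 = q' * (-(ρ.im))  roughly
  have hq' : q' = 0 := by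
    rcases him' with h' | h'
    · exact h'
    · exact absurd h' hrho_im_pos.ne'
  subst hq'
  have hre' := congrArg Complex.re hpq'
  simp [Complex.add_re, Complex.sub_re, Complex.mul_re] at hre'
  -- hre' : (m':ℝ) - m = p' * n
  have hint : (m'.val : ℤ) - (m.val : ℤ) = p' * n := by
    have : ((m'.val : ℤ) - (m.val : ℤ) : ℝ) = ((p' * (n:ℤ) : ℤ) : ℝ) := by
      push_cast
      push_cast at hre'
      linarith [hre']
    exact_mod_cast this
  have h5 : ((m.val : ℤ)) < (n : ℤ) := by exact_mod_cast m.isLt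
  have h6 : ((m'.val : ℤ)) < (n : ℤ) := by exact_mod_cast m'.isLt
  have h7 : (0:ℤ) ≤ (m.val : ℤ) := Int.natCast_nonneg _
  have h8 : (0:ℤ) ≤ (m'.val : ℤ) := Int.natCast_nonneg _
  have hn' : (0:ℤ) ≤ (n:ℤ) := Int.natCast_nonneg n
  have hp' : p' = 0 := by
    rcases lt_trichotomy p' 0 with h' | h' | h'
    · have := mul_le_mul_of_nonneg_right (show p' ≤ -1 by omega) hn'
      linarith
    · exact h'
    · have := mul_le_mul_of_nonneg_right (show 1 ≤ p' by omega) hn'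
      linarith
  subst hp'
  have : (m.val : ℤ) = (m'.val : ℤ) := by linarith
  exact Fin.ext (by exact_mod_cast this)

lemma mkG_eq' (x y : ℂ) (p q : ℤ) (h : y - x = (p:ℂ) + (q:ℂ) * ρ) : mkG x = mkG y :=
  mkG_eq (h ▸ mem_Δ p q)

lemma mkGn_eq' {n : ℕ} (x y : ℂ) (p q : ℤ) (h : y - x = (p:ℂ) * n + (q:ℂ) * (1 - ρ)) :
    mkGn n x = mkGn n y :=
  mkGn_eq (h ▸ mem_Δn n p q)

lemma fin3_cases : ∀ l : Fin 3, l = 0 ∨ l = 1 ∨ l = 2 := by decide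

lemma phi_step {n : ℕ} {φ : An n → An n}
    (hφ : ∀ w z : ℂ, φ (mkG w, mkGn n z) = (mkG (ρ * w), mkGn n (z + a)))
    (l : Fin 3) (m : Fin n) : φ (P n l m) = P n (l + 1) m := by
  have hs := hrho_sum
  rcases fin3_cases l with rfl | rfl | rfl
  · rw [P, hφ, show ((0:Fin 3)+1) = 1 from rfl]
    refine Prod.ext ?_ ?_ <;> simp only [P]
    · exact mkG_eq' _ _ 1 (-1) (by unfold a; push_cast [Fin.val_zero, Fin.val_one]; ring)
    · exact mkGn_eq' _ _ 0 0 (by unfold a; push_cast [Fin.val_zero, Fin.val_one]; ring)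
  · rw [P, hφ, show ((1:Fin 3)+1) = 2 from rfl]
    refine Prod.ext ?_ ?_ <;> simp only [P]
    · exact mkG_eq' _ _ 1 (-2) (by unfold a; push_cast [Fin.val_one, show ((2:Fin 3):ℕ) = 2 from rfl]; linear_combination (1/3 : ℂ) * hs)
    · exact mkGn_eq' _ _ 0 0 (by unfold a; push_cast [Fin.val_one, show ((2:Fin 3):ℕ) = 2 from rfl]; ring)
  · rw [P, hφ, show ((2:Fin 3)+1) = 0 from rfl]
    refine Prod.ext ?_ ?_ <;> simp only [P]
    · exact mkG_eq' _ _ 0 (-2) (by unfold a; push_cast [Fin.val_zero, show ((2:Fin 3):ℕ) = 2 from rfl]; linear_combination (2/3 : ℂ) * hs)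
    · exact mkGn_eq' _ _ 0 (-1) (by unfold a; push_cast [Fin.val_zero, show ((2:Fin 3):ℕ) = 2 from rfl]; ring)

open Fin.NatCast Fin.CommRing in
lemma phi_iter {n : ℕ} {φ : An n → An n}
    (hφ : ∀ w z : ℂ, φ (mkG w, mkGn n z) = (mkG (ρ * w), mkGn n (z + a)))
    (k : ℕ) (l : Fin 3) (m : Fin n) : φ^[k] (P n l m) = P n (l + (k : Fin 3)) m := by
  induction k with
  | zero => simp
  | succ k ih =>
    rw [Function.iterate_succ_apply', ih, phi_step hφ]
    congr 1
    push_cast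
    ring

/-- `φ(P_{l,m}) = P_{l+1 mod 3, m}`; hence the set of the `3n` points `P_{l,m}` is
`φ`-invariant and decomposes into exactly `n` orbits `{P_{0,m}, P_{1,m}, P_{2,m}}`,
each of size three. -/
theorem stmt11 (n : ℕ) (hn : 0 < n) (φ : An n → An n)
    (hφ : ∀ w z : ℂ, φ (mkG w, mkGn n z) = (mkG (ρ * w), mkGn n (z + a))) :
    (∀ (l : Fin 3) (m : Fin n), φ (P n l m) = P n (l + 1) m) ∧
    (φ '' {p | ∃ (l : Fin 3) (m : Fin n), p = P n l m}
      = {p | ∃ (l : Fin 3) (m : Fin n), p = P n l m}) ∧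
    (∀ (l : Fin 3) (m : Fin n),
      {x | ∃ k : ℕ, x = φ^[k] (P n l m)} = ({P n 0 m, P n 1 m, P n 2 m} : Set (An n))) ∧
    (∀ m : Fin n, ({P n 0 m, P n 1 m, P n 2 m} : Set (An n)).ncard = 3) ∧
    (∀ m m' : Fin n, m ≠ m' →
      Disjoint ({P n 0 m, P n 1 m, P n 2 m} : Set (An n))
        ({P n 0 m', P n 1 m', P n 2 m'} : Set (An n))) := by
  refine ⟨phi_step hφ, ?_, ?_, ?_, ?_⟩
  · ext x
    simp only [Set.mem_image, Set.mem_setOf_eq]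
    constructor
    · rintro ⟨y, ⟨l, m, rfl⟩, rfl⟩
      exact ⟨l + 1, m, phi_step hφ l m⟩
    · rintro ⟨l, m, rfl⟩
      refine ⟨P n (l - 1) m, ⟨l - 1, m, rfl⟩, ?_⟩
      rw [phi_step hφ]
      congr 1
      open Fin.CommRing in ring
  · intro l m
    ext x
    simp only [Set.mem_setOf_eq, Set.mem_insert_iff, Set.mem_singleton_iff]
    constructor
    · rintro ⟨k, rfl⟩
      rw [phi_iter hφ]
      open Fin.NatCast in rcases fin3_cases (l + (k : Fin 3)) with h | h | h <;> rw [h] <;> tauto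
    · have key : ∀ j : Fin 3, P n j m = φ^[(j - l).val] (P n l m) := by
        intro j
        rw [phi_iter hφ, Fin.cast_val_eq_self]
        congr 1
        open Fin.CommRing in ring
      rintro (rfl | rfl | rfl)
      · exact ⟨_, key 0⟩
      · exact ⟨_, key 1⟩
      · exact ⟨_, key 2⟩
  · intro m
    rw [Set.ncard_eq_three]
    refine ⟨_, _, _, ?_, ?_, ?_, rfl⟩
    · intro h; exact absurd (P_inj h).1 (by decide)
    · intro h; exact absurd (P_inj h).1 (by decide)
    · intro h; exact absurd (P_inj h).1 (by decide)
  · intro m m' hmm'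
    rw [Set.disjoint_left]
    intro x hx hx'
    simp only [Set.mem_insert_iff, Set.mem_singleton_iff] at hx hx'
    rcases hx with rfl | rfl | rfl <;> rcases hx' with h | h | h <;>
      exact hmm' (P_inj h).2
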